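/- Let F be holomorphic on an open subset of ℂⁿ with all ∂_i F nowhere vanishing, n ≥ 3. Setting L_{ij} := ln(F'_i/F'_j) (locally), the condition '∂_k L_{ij} = 0 for all pairwise distinct triples i,j,k' is equivalent to the condition 'F''_{ij}/(F'_i F'_j) takes the same value for all pairs i ≠ j'. -/

import Mathlib

/-- Complex partial derivative of `f : ℂⁿ → ℂ` in the `i`-th coordinate direction. -/
noncomputable def pd {n : ℕ} (i : Fin n) (f : (Fin n → ℂ) → ℂ) : (Fin n → ℂ) → ℂ :=
  fun x => fderiv ℂ f x (Pi.single i 1)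

lemma pd_apply_snd {n : ℕ} (f : (Fin n → ℂ) → ℂ) (i j : Fin n) (x : Fin n → ℂ)
    (hf : ContDiffAt ℂ 2 f x) :
    pd i (pd j f) x = fderiv ℂ (fderiv ℂ f) x (Pi.single i 1) (Pi.single j 1) := by
  have hdf : DifferentiableAt ℂ (fderiv ℂ f) x := by
    have h1 : ContDiffAt ℂ 1 (fderiv ℂ f) x := by
      apply ContDiffAt.fderiv_right hf
      norm_cast
    exact h1.differentiableAt one_ne_zero
  have key := ((ContinuousLinearMap.apply ℂ ℂ (Pi.single j (1:ℂ))).hasFDerivAt.comp x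
      hdf.hasFDerivAt).fderiv
  have h2 : pd i (pd j f) x = ((ContinuousLinearMap.apply ℂ ℂ (Pi.single j (1:ℂ))).comp
      (fderiv ℂ (fderiv ℂ f) x)) (Pi.single i 1) := by
    rw [← key]; rfl
  exact h2

lemma pd_symm {n : ℕ} (f : (Fin n → ℂ) → ℂ) (i j : Fin n) (x : Fin n → ℂ)
    (hf : ContDiffAt ℂ ⊤ f x) :
    pd i (pd j f) x = pd j (pd i f) x := by
  have h2 : ContDiffAt ℂ 2 f x := hf.of_le (by exact_mod_cast le_top)
  rw [pd_apply_snd f i j x h2, pd_apply_snd f j i x h2]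
  exact (h2.isSymmSndFDerivAt minSmoothness_of_isRCLikeNormedField.le) _ _

/-- For `F` holomorphic on an open `U ⊆ ℂⁿ` (`n ≥ 3`) with all `∂ᵢF` nowhere zero:
the condition `∂_k L_{ij} = 0` for all pairwise distinct `i,j,k` — where
`L_{ij} = ln(F'_i/F'_j)`, so that `∂_k L_{ij} = F''_{ik}/F'_i − F''_{jk}/F'_j` — is
equivalent to `F''_{ij}/(F'_i F'_j)` taking the same value for all pairs `i ≠ j`. -/
theorem stmt_16 (n : ℕ) (hn : 3 ≤ n) (U : Set (Fin n → ℂ)) (hU : IsOpen U)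
    (F : (Fin n → ℂ) → ℂ) (hF : ContDiffOn ℂ ⊤ F U)
    (hF' : ∀ x ∈ U, ∀ i, pd i F x ≠ 0) :
    (∀ x ∈ U, ∀ i j k : Fin n, i ≠ j → j ≠ k → i ≠ k →
        pd k (pd i F) x / pd i F x - pd k (pd j F) x / pd j F x = 0) ↔
      (∀ x ∈ U, ∀ i j r s : Fin n, i ≠ j → r ≠ s →
        pd i (pd j F) x / (pd i F x * pd j F x) =
          pd r (pd s F) x / (pd r F x * pd s F x)) := by
  constructor
  · intro H x hx i j r s hij hrs
    have hFx : ContDiffAt ℂ ⊤ F x := hF.contDiffAt (hU.mem_nhds hx)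
    set Q : Fin n → Fin n → ℂ :=
      fun a b => pd a (pd b F) x / (pd a F x * pd b F x) with hQ
    have hsymm : ∀ a b, Q a b = Q b a := by
      intro a b
      simp only [hQ]
      rw [pd_symm F a b x hFx, mul_comm]
    -- from H: for distinct a b c, Q c a = Q c b
    have hA : ∀ a b c : Fin n, a ≠ b → b ≠ c → a ≠ c → Q c a = Q c b := by
      intro a b c hab hbc hac
      have h := H x hx a b c hab hbc hac
      have h' : pd c (pd a F) x / pd a F x = pd c (pd b F) x / pd b F x :=
        sub_eq_zero.mp h
      simp only [hQ]
      have ha := hF' x hx a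
      have hb := hF' x hx b
      have hc := hF' x hx c
      field_simp at h' ⊢
      linear_combination h'
    -- helper: fix first slot
    have hB : ∀ a b c : Fin n, a ≠ b → a ≠ c → Q a b = Q a c := by
      intro a b c hab hac
      rcases eq_or_ne b c with rfl | hbc
      · rfl
      · exact hA b c a hbc hac.symm hab.symm
    show Q i j = Q r s
    rcases eq_or_ne i r with rfl | hir
    · exact hB i j s hij hrs
    · rcases eq_or_ne i s with rfl | his
      · rcases eq_or_ne j r with rfl | hjr
        · exact hsymm i j
        · calc Q i j = Q j i := hsymm i j
            _ = Q j r := hB j i r hij.symm hjr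
            _ = Q r j := hsymm j r
            _ = Q r i := hB r j i hjr.symm hir.symm
      · calc Q i j = Q i s := hB i j s hij his
          _ = Q s i := hsymm i s
          _ = Q s r := hB s i r his.symm hrs.symm
          _ = Q r s := hsymm s r
  · intro H x hx i j k hij hjk hik
    have h := H x hx k i k j hik.symm hjk.symm
    have hi := hF' x hx i
    have hj := hF' x hx j
    have hk := hF' x hx k
    field_simp at h
    have h2 := mul_left_cancel₀ hk (show pd k F x * (pd k (pd i F) x * pd j F x)
        = pd k F x * (pd k (pd j F) x * pd i F x) by linear_combination pd k F x * h)
    rw [sub_eq_zero, div_eq_div_iff hi hj]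
    linear_combination h2
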